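/- For every temperature function α : S → ℝ with α(s) > 0 for all s, the soft Bellman operator T_α is a γ-contraction in the sup norm: for all Q, Q' : S × A → ℝ, ‖T_α Q − T_α Q'‖∞ ≤ γ · ‖Q − Q'‖∞, where ‖F‖∞ = max_{(s,a)∈S×A} |F(s,a)|. -/

import Mathlib

open Finset Real

/-- The soft Bellman operator at temperature function `α`:
`(T_α Q)(s,a) = r(s,a) + γ·∑_{s'} P(s'|s,a)·α(s')·log(∑_{a'} exp(Q(s',a')/α(s')))`. -/
noncomputable def softBellman {S A : Type*} [Fintype S] [Fintype A]
    (r : S → A → ℝ) (γ : ℝ) (P : S → A → S → ℝ) (α : S → ℝ)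
    (Q : S → A → ℝ) (s : S) (a : A) : ℝ :=
  r s a + γ * ∑ s', P s a s' * (α s' * Real.log (∑ a', Real.exp (Q s' a' / α s')))

/-- Sup norm on `S × A → ℝ`: `‖F‖∞ = max_{(s,a)} |F(s,a)|`. -/
noncomputable def supNorm {S A : Type*} [Fintype S] [Fintype A] [Nonempty S] [Nonempty A]
    (Q : S → A → ℝ) : ℝ :=
  Finset.univ.sup' Finset.univ_nonempty (fun p : S × A => |Q p.1 p.2|)

lemma lse_diff_le {A : Type*} [Fintype A] [Nonempty A] (α : ℝ) (hα : 0 < α)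
    (v w : A → ℝ) (c : ℝ) (h : ∀ a, v a - w a ≤ c) :
    α * Real.log (∑ a, Real.exp (v a / α)) - α * Real.log (∑ a, Real.exp (w a / α)) ≤ c := by
  have hpos : 0 < ∑ a, Real.exp (w a / α) :=
    Finset.sum_pos (fun a _ => Real.exp_pos _) Finset.univ_nonempty
  have hsum : ∑ a, Real.exp (v a / α) ≤ Real.exp (c / α) * ∑ a, Real.exp (w a / α) := by
    rw [Finset.mul_sum]
    refine Finset.sum_le_sum fun a _ => ?_
    rw [← Real.exp_add]
    apply Real.exp_le_exp.mpr
    rw [← add_div]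
    exact (div_le_div_iff_of_pos_right hα).mpr (by linarith [h a])
  have hlog : Real.log (∑ a, Real.exp (v a / α)) ≤ c / α + Real.log (∑ a, Real.exp (w a / α)) := by
    calc Real.log (∑ a, Real.exp (v a / α))
        ≤ Real.log (Real.exp (c / α) * ∑ a, Real.exp (w a / α)) :=
          Real.log_le_log (Finset.sum_pos (fun a _ => Real.exp_pos _) Finset.univ_nonempty) hsum
      _ = c / α + Real.log (∑ a, Real.exp (w a / α)) := by
          rw [Real.log_mul (Real.exp_ne_zero _) (ne_of_gt hpos), Real.log_exp]
  have := mul_le_mul_of_nonneg_left hlog (le_of_lt hα)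
  have hcc : α * (c / α) = c := by field_simp
  nlinarith [this]

lemma lse_abs_diff_le {A : Type*} [Fintype A] [Nonempty A] (α : ℝ) (hα : 0 < α)
    (v w : A → ℝ) (c : ℝ) (h : ∀ a, |v a - w a| ≤ c) :
    |α * Real.log (∑ a, Real.exp (v a / α)) - α * Real.log (∑ a, Real.exp (w a / α))| ≤ c := by
  rw [abs_sub_le_iff]
  constructor
  · exact lse_diff_le α hα v w c (fun a => (abs_le.mp (h a)).2)
  · exact lse_diff_le α hα w v c (fun a => by linarith [(abs_le.mp (h a)).1])

/-- The soft Bellman operator is a `γ`-contraction in the sup norm: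
`‖T_α Q − T_α Q'‖∞ ≤ γ·‖Q − Q'‖∞`. -/
theorem softBellman_contraction {S A : Type*} [Fintype S] [Fintype A] [Nonempty S] [Nonempty A]
    (r : S → A → ℝ) (γ : ℝ) (hγ0 : 0 < γ) (hγ1 : γ < 1)
    (P : S → A → S → ℝ) (hP : ∀ s a s', 0 ≤ P s a s')
    (hP1 : ∀ s a, ∑ s', P s a s' = 1)
    (α : S → ℝ) (hα : ∀ s, 0 < α s)
    (Q Q' : S → A → ℝ) :
    supNorm (fun s a => softBellman r γ P α Q s a - softBellman r γ P α Q' s a) ≤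
      γ * supNorm (fun s a => Q s a - Q' s a) := by
  set M := supNorm (fun s a => Q s a - Q' s a) with hM
  have hbound : ∀ s a, |Q s a - Q' s a| ≤ M := fun s a =>
    Finset.le_sup' (fun p : S × A => |Q p.1 p.2 - Q' p.1 p.2|) (Finset.mem_univ (s, a))
  apply Finset.sup'_le
  rintro ⟨s, a⟩ -
  show |softBellman r γ P α Q s a - softBellman r γ P α Q' s a| ≤ γ * M
  have key : ∀ s', |α s' * Real.log (∑ a', Real.exp (Q s' a' / α s')) -
      α s' * Real.log (∑ a', Real.exp (Q' s' a' / α s'))| ≤ M := fun s' =>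
    lse_abs_diff_le (α s') (hα s') _ _ M (fun a' => hbound s' a')
  have expand : softBellman r γ P α Q s a - softBellman r γ P α Q' s a =
      γ * ∑ s', P s a s' * (α s' * Real.log (∑ a', Real.exp (Q s' a' / α s')) -
        α s' * Real.log (∑ a', Real.exp (Q' s' a' / α s'))) := by
    simp only [softBellman]
    rw [add_sub_add_left_eq_sub, ← mul_sub, ← Finset.sum_sub_distrib]
    congr 1
    exact Finset.sum_congr rfl fun s' _ => by ring
  rw [expand, abs_mul, abs_of_pos hγ0]
  apply mul_le_mul_of_nonneg_left _ (le_of_lt hγ0)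
  calc |∑ s', P s a s' * (α s' * Real.log (∑ a', Real.exp (Q s' a' / α s')) -
        α s' * Real.log (∑ a', Real.exp (Q' s' a' / α s')))|
      ≤ ∑ s', |P s a s' * (α s' * Real.log (∑ a', Real.exp (Q s' a' / α s')) -
        α s' * Real.log (∑ a', Real.exp (Q' s' a' / α s')))| := Finset.abs_sum_le_sum_abs _ _
    _ ≤ ∑ s', P s a s' * M := by
        refine Finset.sum_le_sum fun s' _ => ?_
        rw [abs_mul, abs_of_nonneg (hP s a s')]
        exact mul_le_mul_of_nonneg_left (key s') (hP s a s')
    _ = M := by rw [← Finset.sum_mul, hP1, one_mul]
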